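/- Let X be a dcpo. X is continuous (every element is the directed supremum of the elements way-below it) if and only if the supremum map sup : Idl(X) → X (defined on the ideal completion of X, ordered by inclusion) has a left adjoint, which is then given by x ↦ {y : y ≪ x}. -/
import Mathlib


/-- An ideal of a preorder: a nonempty directed down-set. -/
def IsIdealSet {X : Type*} [Preorder X] (I : Set X) : Prop :=
  I.Nonempty ∧ DirectedOn (· ≤ ·) I ∧ ∀ ⦃a b : X⦄, a ≤ b → b ∈ I → a ∈ I

/-- The way-below relation of a dcpo, phrased via the supremum map on ideals:
`y ≪ x` iff `y ∈ I` for every ideal `I` with `x ≤ sup I`. -/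
def wayBelowI {X : Type*} [Preorder X]
    (sup : {I : Set X // IsIdealSet I} → X) (y x : X) : Prop :=
  ∀ I : {I : Set X // IsIdealSet I}, x ≤ sup I → y ∈ I.1

/-- A dcpo `X` is continuous (every `↡x` is directed with supremum `x`) iff the
supremum map `sup : Idl(X) → X` has a left adjoint, which is then given by
`x ↦ {y | y ≪ x}`. -/
theorem stmt_13 {X : Type*} [PartialOrder X]
    (sup : {I : Set X // IsIdealSet I} → X)
    (hsup : ∀ I, IsLUB I.1 (sup I)) :
    ((∀ x : X, ({y | wayBelowI sup y x}).Nonempty ∧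
        DirectedOn (· ≤ ·) {y | wayBelowI sup y x} ∧
        IsLUB {y | wayBelowI sup y x} x) ↔
      (∃ l : X → {I : Set X // IsIdealSet I},
        ∀ (x : X) (I : {I : Set X // IsIdealSet I}), (l x).1 ⊆ I.1 ↔ x ≤ sup I)) ∧
    ((∀ x : X, ({y | wayBelowI sup y x}).Nonempty ∧
        DirectedOn (· ≤ ·) {y | wayBelowI sup y x} ∧
        IsLUB {y | wayBelowI sup y x} x) →
      ∀ (x : X) (I : {I : Set X // IsIdealSet I}),
        ({y | wayBelowI sup y x} ⊆ I.1 ↔ x ≤ sup I)) := by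
  have key : (∀ x : X, ({y | wayBelowI sup y x}).Nonempty ∧
        DirectedOn (· ≤ ·) {y | wayBelowI sup y x} ∧
        IsLUB {y | wayBelowI sup y x} x) →
      ∀ (x : X) (I : {I : Set X // IsIdealSet I}),
        ({y | wayBelowI sup y x} ⊆ I.1 ↔ x ≤ sup I) := by
    intro h x I
    constructor
    · intro hsubI
      have hx := (h x).2.2
      exact hx.2 (fun y hy => (hsup I).1 (hsubI hy))
    · intro hle y hy
      exact hy I hle
  refine ⟨⟨fun h => ?_, fun hl => ?_⟩, key⟩
  · refine ⟨fun x => ⟨{y | wayBelowI sup y x},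
      (h x).1, (h x).2.1, fun a b hab hb => ?_⟩, key h⟩
    intro I hI
    exact I.2.2.2 hab (hb I hI)
  · obtain ⟨l, hl⟩ := hl
    intro x
    have hxl : x ≤ sup (l x) := (hl x (l x)).1 subset_rfl
    have h1 : {y | wayBelowI sup y x} ⊆ (l x).1 := fun y hy => hy (l x) hxl
    have h2 : (l x).1 ⊆ {y | wayBelowI sup y x} := fun y hy I hI => (hl x I).2 hI hy
    have heq : {y | wayBelowI sup y x} = (l x).1 := subset_antisymm h1 h2
    rw [heq]
    refine ⟨(l x).2.1, (l x).2.2.1, ?_, fun b hb => le_trans hxl ((hsup (l x)).2 hb)⟩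
    -- x is an upper bound of (l x).1
    have hD : IsIdealSet {z : X | z ≤ x} :=
      ⟨⟨x, le_refl x⟩, fun a ha c hc => ⟨x, le_refl x, ha, hc⟩,
        fun a b hab hb => le_trans hab hb⟩
    have hxD : x ≤ sup ⟨_, hD⟩ := (hsup ⟨_, hD⟩).1 (le_refl x)
    exact fun y hy => (hl x ⟨_, hD⟩).2 hxD hy
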